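/- Let n ≥ b ≥ 3 and α ∈ [0,1). Let G⋆ be a connected K_{1,b}-minor free graph on n vertices attaining the maximum A_α-spectral radius among all connected K_{1,b}-minor free graphs on n vertices, x its Perron vector, v* a vertex of maximum coordinate, U = N_{G⋆}(v*), U_1 = {v ∈ U : d_U(v) = b − 2}, U_2 = U ∖ U_1, W = V(G⋆) ∖ (U ∪ {v*}), and N²(v*) = {w ∈ W : dist_{G⋆}(v*, w) = 2}. Then for every vertex v ∈ U ∪ W: d_W(v) = 0 if v ∈ U_1; d_W(v) ≤ 1 if v ∈ U_2 ∪ N²(v*); and d_W(v) ≤ 2 in all remaining cases (i.e., v ∈ W ∖ N²(v*)). Here d_X(v) denotes the number of neighbors of v lying in the set X. -/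

import Mathlib

open scoped Classical


/-- `H` is a minor of `G` (branch-set / minor-model definition). -/
def SimpleGraph.IsMinor {W V : Type*} (H : SimpleGraph W) (G : SimpleGraph V) : Prop :=
  ∃ f : W → Set V,
    (∀ w, (f w).Nonempty) ∧
    (∀ w, (G.induce (f w)).Connected) ∧
    (∀ w₁ w₂, w₁ ≠ w₂ → Disjoint (f w₁) (f w₂)) ∧
    (∀ w₁ w₂, H.Adj w₁ w₂ → ∃ v₁ ∈ f w₁, ∃ v₂ ∈ f w₂, G.Adj v₁ v₂)

/-- `G` has no `K_{a,b}`-minor. -/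
def kabMinorFree (a b : ℕ) {V : Type*} (G : SimpleGraph V) : Prop :=
  ¬ (completeBipartiteGraph (Fin a) (Fin b)).IsMinor G

/-- The `A_α`-matrix `α·D(G) + (1-α)·A(G)` of a graph. -/
noncomputable def aMatrix {V : Type*} [Fintype V] (G : SimpleGraph V) (α : ℝ) :
    Matrix V V ℝ :=
  Matrix.of fun u w =>
    (if u = w then α * ∑ z, (if G.Adj w z then (1 : ℝ) else 0) else 0)
    + (if G.Adj u w then (1 - α) else 0)

/-- The `A_α`-spectral radius: the largest eigenvalue of the `A_α`-matrix. -/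
noncomputable def lambdaAlpha {V : Type*} [Fintype V] [DecidableEq V]
    (G : SimpleGraph V) (α : ℝ) : ℝ :=
  sSup (spectrum ℝ (aMatrix G α))


/-- `τ = ⌊(b+1)/(a+1)⌋`, the number of stars of the star forest `F_{a,b}`. -/
def tauOf (a b : ℕ) : ℕ := (b + 1) / (a + 1)

/-- The star forest `F_{a,b}` on `b+1` vertices: the disjoint union of
`τ = ⌊(b+1)/(a+1)⌋` stars, `τ-1` of them isomorphic to `K_{1,a}` and one
isomorphic to `K_{1,c}` with `c = b - (a+1)(τ-1)`.  Vertex `i` belongs to the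
block `min (i/(a+1)) (τ-1)`, first `τ-1` blocks of size `a+1`, whose first
vertex is the center of its star. -/
def starForest (a b : ℕ) : SimpleGraph (Fin (b + 1)) where
  Adj i j := i ≠ j ∧
    min ((i : ℕ) / (a + 1)) (tauOf a b - 1) = min ((j : ℕ) / (a + 1)) (tauOf a b - 1) ∧
    ((i : ℕ) = min ((i : ℕ) / (a + 1)) (tauOf a b - 1) * (a + 1) ∨
     (j : ℕ) = min ((j : ℕ) / (a + 1)) (tauOf a b - 1) * (a + 1))
  symm := by
    constructor
    intro i j h
    exact ⟨h.1.symm, h.2.1.symm, h.2.2.symm⟩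
  loopless := by constructor; intro i h; exact h.1 rfl

/-- `S^k(K_b)`: the complete graph `K_b` with one edge (between vertices `0`
and `1`) subdivided `k` times. -/
def subdividedComplete (b k : ℕ) : SimpleGraph (Fin b ⊕ Fin k) where
  Adj x y :=
    match x, y with
    | Sum.inl i, Sum.inl j =>
        i ≠ j ∧ (k = 0 ∨ ¬(((i : ℕ) = 0 ∧ (j : ℕ) = 1) ∨ ((i : ℕ) = 1 ∧ (j : ℕ) = 0)))
    | Sum.inl i, Sum.inr p => ((i : ℕ) = 0 ∧ (p : ℕ) = 0) ∨ ((i : ℕ) = 1 ∧ (p : ℕ) = k - 1)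
    | Sum.inr p, Sum.inl i => ((i : ℕ) = 0 ∧ (p : ℕ) = 0) ∨ ((i : ℕ) = 1 ∧ (p : ℕ) = k - 1)
    | Sum.inr p, Sum.inr q => (p : ℕ) + 1 = (q : ℕ) ∨ (q : ℕ) + 1 = (p : ℕ)
  symm := by
    constructor
    rintro (i | p) (j | q) h
    · exact ⟨h.1.symm, by tauto⟩
    · exact h
    · exact h
    · tauto
  loopless := by
    constructor
    rintro (i | p) h
    · exact h.1 rfl
    · rcases h with h | h <;> omega

/-- The graph `F(a₁,a₂,a₃)`: a complete graph on `a₁+a₂+a₃ = b-1` vertices with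
partition `V₁ ∪ V₂ ∪ V₃` (`|Vᵢ| = aᵢ`), together with a path `v₁v₂v₃` on three
new vertices, every vertex of `Vᵢ` joined to `vᵢ`. -/
def fGraph (a₁ a₂ a₃ : ℕ) : SimpleGraph (Fin (a₁ + a₂ + a₃) ⊕ Fin 3) where
  Adj x y :=
    match x, y with
    | Sum.inl u, Sum.inl w => u ≠ w
    | Sum.inl u, Sum.inr i =>
        ((i : ℕ) = 0 ∧ (u : ℕ) < a₁) ∨
        ((i : ℕ) = 1 ∧ a₁ ≤ (u : ℕ) ∧ (u : ℕ) < a₁ + a₂) ∨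
        ((i : ℕ) = 2 ∧ a₁ + a₂ ≤ (u : ℕ))
    | Sum.inr i, Sum.inl u =>
        ((i : ℕ) = 0 ∧ (u : ℕ) < a₁) ∨
        ((i : ℕ) = 1 ∧ a₁ ≤ (u : ℕ) ∧ (u : ℕ) < a₁ + a₂) ∨
        ((i : ℕ) = 2 ∧ a₁ + a₂ ≤ (u : ℕ))
    | Sum.inr i, Sum.inr j => (i : ℕ) + 1 = (j : ℕ) ∨ (j : ℕ) + 1 = (i : ℕ)
  symm := by
    constructor
    rintro (u | i) (w | j) h
    · exact h.symm
    · exact h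
    · exact h
    · tauto
  loopless := by
    constructor
    rintro (u | i) h
    · exact h rfl
    · rcases h with h | h <;> omega

/-- The Petersen graph: outer `5`-cycle, inner pentagram, five spokes. -/
def petersen : SimpleGraph (Fin 5 ⊕ Fin 5) where
  Adj x y :=
    match x, y with
    | Sum.inl i, Sum.inl j => (j : ℕ) = ((i : ℕ) + 1) % 5 ∨ (i : ℕ) = ((j : ℕ) + 1) % 5
    | Sum.inl i, Sum.inr j => i = j
    | Sum.inr i, Sum.inl j => i = j
    | Sum.inr i, Sum.inr j => (j : ℕ) = ((i : ℕ) + 2) % 5 ∨ (i : ℕ) = ((j : ℕ) + 2) % 5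
  symm := by
    constructor
    rintro (i | i) (j | j) h
    · tauto
    · exact h.symm
    · exact h.symm
    · tauto
  loopless := by
    constructor
    rintro (i | i) h <;>
      · have hi : (i : ℕ) < 5 := i.isLt
        rcases h with h | h <;> omega

/-- The join `G ∨ H` of two graphs. -/
def joinG {V W : Type*} (G : SimpleGraph V) (H : SimpleGraph W) : SimpleGraph (V ⊕ W) where
  Adj x y :=
    match x, y with
    | Sum.inl u, Sum.inl w => G.Adj u w
    | Sum.inl _, Sum.inr _ => True
    | Sum.inr _, Sum.inl _ => True
    | Sum.inr u, Sum.inr w => H.Adj u w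
  symm := by
    constructor
    rintro (u | u) (w | w) h
    · exact h.symm
    · trivial
    · trivial
    · exact h.symm
  loopless := by
    constructor
    rintro (u | u) h
    · exact G.loopless.irrefl u h
    · exact H.loopless.irrefl u h

/-- The disjoint union of two graphs. -/
def disjUnion {V W : Type*} (G : SimpleGraph V) (H : SimpleGraph W) : SimpleGraph (V ⊕ W) where
  Adj x y :=
    match x, y with
    | Sum.inl u, Sum.inl w => G.Adj u w
    | Sum.inl _, Sum.inr _ => False
    | Sum.inr _, Sum.inl _ => False
    | Sum.inr u, Sum.inr w => H.Adj u w
  symm := by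
    constructor
    rintro (u | u) (w | w) h
    · exact h.symm
    · exact h
    · exact h
    · exact h.symm
  loopless := by
    constructor
    rintro (u | u) h
    · exact G.loopless.irrefl u h
    · exact H.loopless.irrefl u h

/-- `k` disjoint copies of the graph `H`. -/
def copies (k : ℕ) {W : Type*} (H : SimpleGraph W) : SimpleGraph (Fin k × W) where
  Adj x y := x.1 = y.1 ∧ H.Adj x.2 y.2
  symm := by constructor; rintro x y ⟨h1, h2⟩; exact ⟨h1.symm, h2.symm⟩
  loopless := by constructor; rintro x ⟨h1, h2⟩; exact H.loopless.irrefl _ h2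

/-- `K_b^e`: the complete graph `K_b` with the edge between vertices `0` and
`1` removed and a pendant vertex attached to each of `0` and `1`. -/
def kbE (b : ℕ) : SimpleGraph (Fin b ⊕ Fin 2) where
  Adj x y :=
    match x, y with
    | Sum.inl i, Sum.inl j =>
        i ≠ j ∧ ¬(((i : ℕ) = 0 ∧ (j : ℕ) = 1) ∨ ((i : ℕ) = 1 ∧ (j : ℕ) = 0))
    | Sum.inl i, Sum.inr p => (i : ℕ) = (p : ℕ)
    | Sum.inr p, Sum.inl i => (i : ℕ) = (p : ℕ)
    | Sum.inr _, Sum.inr _ => False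
  symm := by
    constructor
    rintro (i | p) (j | q) h
    · exact ⟨h.1.symm, by tauto⟩
    · exact h
    · exact h
    · exact h
  loopless := by
    constructor
    rintro (i | p) h
    · exact h.1 rfl
    · exact h

/-- The number of neighbours of `v` lying in the set `F`. -/
noncomputable def degIn {V : Type*} (G : SimpleGraph V) (F : Set V) (v : V) : ℕ :=
  (G.neighborSet v ∩ F).ncard

/-- `F` is a union of (vertex sets of) connected components of `G - S`. -/
def isComponentUnion {V : Type*} (G : SimpleGraph V) (S : Set V) (F : Set V) : Prop :=
  F ⊆ Sᶜ ∧ ∀ u v : ↥(Sᶜ : Set V), (G.induce Sᶜ).Reachable u v → (u : V) ∈ F → (v : V) ∈ F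

/-- A graph has the `(a,b)`-property if it is `K_{r,s}`-minor free for all
positive `r, s` with `r + s = b + 1` and `r ≤ ω = min {a, ⌊(b+1)/2⌋}`. -/
def abProperty (a b : ℕ) {V : Type*} (G : SimpleGraph V) : Prop :=
  ∀ r s : ℕ, 0 < r → 0 < s → r + s = b + 1 → r ≤ min a ((b + 1) / 2) →
    ¬ (completeBipartiteGraph (Fin r) (Fin s)).IsMinor G


open Matrix

lemma aMatrix_isHermitian {n : ℕ} (G : SimpleGraph (Fin n)) (α : ℝ) :
    (aMatrix G α).IsHermitian := by
  unfold Matrix.IsHermitian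
  ext i j
  simp only [Matrix.conjTranspose_apply, aMatrix, Matrix.of_apply, star_trivial]
  by_cases h : i = j
  · subst h; simp
  · simp [h, Ne.symm h, G.adj_comm]

lemma rayleigh_le_sSup_spectrum {n : ℕ} (hn : 0 < n) (M : Matrix (Fin n) (Fin n) ℝ)
    (hM : M.IsHermitian) (y : Fin n → ℝ) :
    y ⬝ᵥ (M *ᵥ y) ≤ sSup (spectrum ℝ M) * (y ⬝ᵥ y) := by
  haveI : Nonempty (Fin n) := ⟨⟨0, hn⟩⟩
  set U : Matrix (Fin n) (Fin n) ℝ := (hM.eigenvectorUnitary : Matrix (Fin n) (Fin n) ℝ) with hU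
  set lam := hM.eigenvalues with hlam
  have hU2 : U * star U = 1 := (Matrix.mem_unitaryGroup_iff).mp hM.eigenvectorUnitary.2
  set z : Fin n → ℝ := (star U) *ᵥ y with hz
  have hdiag : Matrix.diagonal (RCLike.ofReal ∘ lam) = Matrix.diagonal lam := by
    congr 1
  have hMy : M *ᵥ y = U *ᵥ ((Matrix.diagonal lam) *ᵥ z) := by
    conv_lhs => rw [hM.spectral_theorem, Unitary.conjStarAlgAut_apply]
    rw [hdiag, hz, ← Matrix.mulVec_mulVec, ← Matrix.mulVec_mulVec]
  have hyU : ∀ w : Fin n → ℝ, y ⬝ᵥ (U *ᵥ w) = z ⬝ᵥ w := by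
    intro w
    rw [Matrix.dotProduct_mulVec]
    congr 1
    ext i
    simp only [hz, Matrix.vecMul, Matrix.mulVec, dotProduct, Matrix.star_apply,
      star_trivial]
    exact Finset.sum_congr rfl fun j _ => mul_comm _ _
  have hzz : z ⬝ᵥ z = y ⬝ᵥ y := by
    rw [hz]
    rw [Matrix.dotProduct_mulVec]
    have : (star U *ᵥ y) ᵥ* star U = U *ᵥ (star U *ᵥ y) := by
      ext i
      simp only [Matrix.vecMul, Matrix.mulVec, dotProduct, Matrix.star_apply, star_trivial]
      exact Finset.sum_congr rfl fun j _ => mul_comm _ _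
    rw [this, Matrix.mulVec_mulVec, hU2, Matrix.one_mulVec]
  have hbdd : BddAbove (spectrum ℝ M) := by
    rw [hM.spectrum_real_eq_range_eigenvalues]
    exact (Set.finite_range _).bddAbove
  have hle : ∀ i, lam i ≤ sSup (spectrum ℝ M) :=
    fun i => le_csSup hbdd (hM.eigenvalues_mem_spectrum_real i)
  calc y ⬝ᵥ (M *ᵥ y) = z ⬝ᵥ ((Matrix.diagonal lam) *ᵥ z) := by rw [hMy, hyU]
    _ = ∑ i, lam i * (z i * z i) := by
        simp only [dotProduct, Matrix.mulVec_diagonal]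
        exact Finset.sum_congr rfl fun i _ => by ring
    _ ≤ ∑ i, sSup (spectrum ℝ M) * (z i * z i) := by
        apply Finset.sum_le_sum
        intro i _
        exact mul_le_mul_of_nonneg_right (hle i) (mul_self_nonneg _)
    _ = sSup (spectrum ℝ M) * (z ⬝ᵥ z) := by
        rw [dotProduct, Finset.mul_sum]
    _ = sSup (spectrum ℝ M) * (y ⬝ᵥ y) := by rw [hzz]

lemma lt_lambdaAlpha_of_rayleigh {n : ℕ} (hn : 0 < n) (H : SimpleGraph (Fin n)) (α c : ℝ)
    (y : Fin n → ℝ) (hy : 0 < y ⬝ᵥ y)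
    (h : c * (y ⬝ᵥ y) < y ⬝ᵥ ((aMatrix H α) *ᵥ y)) : c < lambdaAlpha H α := by
  have h2 := rayleigh_le_sSup_spectrum hn _ (aMatrix_isHermitian H α) y
  unfold lambdaAlpha
  nlinarith [h.trans_le h2]

/-- Singleton induced subgraphs are connected. -/
lemma induce_singleton_connected {V : Type*} (G : SimpleGraph V) (v : V) :
    (G.induce {v}).Connected := by
  rw [SimpleGraph.connected_iff]
  refine ⟨?_, ⟨⟨v, rfl⟩⟩⟩
  intro a c
  have : a = c := Subtype.ext (by rw [a.2, c.2])
  exact this ▸ SimpleGraph.Reachable.refl _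

/-- The induced graph on the support of a walk is connected. -/
lemma induce_support_connected {V : Type*} {G : SimpleGraph V} {u v : V} (p : G.Walk u v) :
    (G.induce {m | m ∈ p.support}).Connected := by
  exact p.connected_induce_support

/-- Build a `K_{1,b}` minor from a connected centre set and `b` attached vertices. -/
lemma k1b_minor {n b : ℕ} (G : SimpleGraph (Fin n)) (C : Set (Fin n))
    (hC : (G.induce C).Connected) (l : Fin b → Fin n) (hinj : Function.Injective l)
    (hlC : ∀ i, l i ∉ C) (hadj : ∀ i, ∃ c ∈ C, G.Adj c (l i)) :
    (completeBipartiteGraph (Fin 1) (Fin b)).IsMinor G := by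
  refine ⟨Sum.elim (fun _ => C) (fun i => {l i}), ?_, ?_, ?_, ?_⟩
  · rintro (w | i)
    · obtain ⟨⟨c, hc⟩⟩ := hC.nonempty
      exact ⟨c, hc⟩
    · exact ⟨l i, rfl⟩
  · rintro (w | i)
    · exact hC
    · exact induce_singleton_connected G (l i)
  · rintro (w₁ | i₁) (w₂ | i₂) hne
    · exact absurd (Subsingleton.elim w₁ w₂) (fun h => hne (congrArg Sum.inl h))
    · exact Set.disjoint_singleton_right.mpr (hlC i₂)
    · exact Set.disjoint_singleton_left.mpr (hlC i₁)
    · refine Set.disjoint_singleton_right.mpr ?_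
      intro h
      exact hne (congrArg Sum.inr (hinj (Set.mem_singleton_iff.mp h)).symm)
  · rintro (w₁ | i₁) (w₂ | i₂) hadj'
    · simp [completeBipartiteGraph] at hadj'
    · obtain ⟨c, hc, hadjc⟩ := hadj i₂
      exact ⟨c, hc, l i₂, rfl, hadjc⟩
    · obtain ⟨c, hc, hadjc⟩ := hadj i₁
      exact ⟨l i₁, rfl, c, hc, hadjc.symm⟩
    · simp [completeBipartiteGraph] at hadj'

/-- Extract an injection `Fin b → S` from `b ≤ S.ncard`. -/
lemma exists_inj_of_le_ncard {V : Type*} {S : Set V} {b : ℕ} (hS : b ≤ S.ncard)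
    (hfin : S.Finite) : ∃ l : Fin b → V, Function.Injective l ∧ ∀ i, l i ∈ S := by
  classical
  obtain ⟨t, hts, htcard⟩ := Set.exists_subset_card_eq hS
  have htfin : t.Finite := hfin.subset hts
  haveI := htfin.fintype
  have hcard : t.toFinset.card = b := by
    rw [← Set.ncard_eq_toFinset_card']; exact htcard
  let e := t.toFinset.equivFin
  refine ⟨fun i => (e.symm (Fin.cast hcard.symm i) : V), ?_, ?_⟩
  · intro i j hij
    have := e.symm.injective (Subtype.ext hij)
    simpa [Fin.ext_iff] using congrArg Fin.val this
  · intro i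
    exact hts (Set.mem_toFinset.mp (e.symm (Fin.cast hcard.symm i)).2)


/-- The clique `{0,…,b-2}` together with a path `b-2 — b-1 — ⋯ — n-1`. -/
def Hgr (n b : ℕ) : SimpleGraph (Fin n) where
  Adj i j := i ≠ j ∧ ((i.val < b-1 ∧ j.val < b-1) ∨
    (i.val+1 = j.val ∧ b-1 ≤ j.val) ∨ (j.val+1 = i.val ∧ b-1 ≤ i.val))
  symm := by constructor; rintro i j ⟨h1, h2⟩; exact ⟨h1.symm, by tauto⟩
  loopless := by constructor; rintro i ⟨h1, _⟩; exact h1 rfl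

lemma Hgr_connected {n b : ℕ} (hb : 3 ≤ b) (hn : b ≤ n) : (Hgr n b).Connected := by
  have hn0 : 0 < n := by omega
  rw [SimpleGraph.connected_iff]
  have key : ∀ k, ∀ v : Fin n, v.val = k → (Hgr n b).Reachable ⟨0, hn0⟩ v := by
    intro k
    induction k using Nat.strong_induction_on with
    | _ k ih =>
      intro v hv
      rcases Nat.eq_zero_or_pos k with h0 | hpos
      · have : v = ⟨0, hn0⟩ := Fin.ext (show v.val = 0 by omega)
        exact this ▸ SimpleGraph.Reachable.refl _
      rcases lt_or_ge k (b-1) with hlt | hge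
      · refine SimpleGraph.Adj.reachable ?_
        refine ⟨fun hEq => ?_, Or.inl ⟨show (0:ℕ) < b-1 by omega, show v.val < b-1 by omega⟩⟩
        have : (0:ℕ) = v.val := congrArg Fin.val hEq
        omega
      · have hk1 : k - 1 < n := by omega
        have hreach := ih (k-1) (by omega) ⟨k-1, hk1⟩ rfl
        refine hreach.trans (SimpleGraph.Adj.reachable ?_)
        refine ⟨fun hEq => ?_, Or.inr (Or.inl ⟨show (k-1)+1 = v.val by omega,
          show b-1 ≤ v.val by omega⟩)⟩
        have : k-1 = v.val := congrArg Fin.val hEq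
        omega
  exact ⟨fun u v => ((key u.val u rfl).symm.trans (key v.val v rfl)), ⟨⟨0, hn0⟩⟩⟩

/-- Walks in an induced subgraph of `Hgr` that start at value `≥ y ≥ b-1` and end
below `y` pass through value `y`. -/
lemma Hgr_cross {n b : ℕ} {C : Set (Fin n)} {y : ℕ} (hy : b-1 ≤ y) :
    ∀ {s t : ↥C} (_ : ((Hgr n b).induce C).Walk s t), y ≤ (s : Fin n).val →
      (t : Fin n).val < y → ∃ m ∈ C, (m : Fin n).val = y := by
  intro s t p
  induction p with
  | nil => intro h1 h2; omega
  | @cons a c t hac q ih =>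
    intro h1 h2
    rcases Nat.eq_or_lt_of_le h1 with heq | hlt
    · exact ⟨(a : Fin n), a.2, heq.symm⟩
    · have hadj : (Hgr n b).Adj (a : Fin n) (c : Fin n) := hac
      obtain ⟨-, hcase⟩ := hadj
      have hcy : y ≤ (c : Fin n).val := by
        rcases hcase with ⟨ha', _⟩ | ⟨h', _⟩ | ⟨h', _⟩ <;> omega
      exact ih hcy h2

lemma ncard_le_one_of_subsingleton {V : Type*} {S : Set V} (h : S.Subsingleton) :
    S.ncard ≤ 1 := by
  rcases S.eq_empty_or_nonempty with hS | ⟨v, hv⟩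
  · simp [hS]
  · have : S ⊆ {v} := fun w hw => by simp [h hw hv]
    simpa using Set.ncard_le_ncard this (Set.finite_singleton v)

lemma Hgr_boundary {n b : ℕ} (hb : 3 ≤ b) (hn : b ≤ n) (C : Set (Fin n))
    (hC : ((Hgr n b).induce C).Connected) :
    {v : Fin n | v ∉ C ∧ ∃ c ∈ C, (Hgr n b).Adj c v}.ncard ≤ b-1 := by
  set B := {v : Fin n | v ∉ C ∧ ∃ c ∈ C, (Hgr n b).Adj c v} with hB
  have cross : ∀ (c₁ c₂ : Fin n), c₁ ∈ C → c₂ ∈ C → ∀ y, b-1 ≤ y → y ≤ c₁.val →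
      c₂.val < y → ∃ m ∈ C, (m : Fin n).val = y := by
    intro c₁ c₂ h₁ h₂ y hy hy1 hy2
    exact (hC.preconnected ⟨c₁, h₁⟩ ⟨c₂, h₂⟩).elim fun p => Hgr_cross hy p hy1 hy2
  by_cases hcase : ∃ c0 ∈ C, c0.val < b-1
  · obtain ⟨c0, hc0, hc0v⟩ := hcase
    -- at most one boundary vertex with value ≥ b-1
    have hB2 : ∀ v₁ ∈ B, ∀ v₂ ∈ B, b-1 ≤ v₁.val → b-1 ≤ v₂.val →
        v₁.val < v₂.val → False := by
      intro v₁ h₁ v₂ h₂ hv₁ hv₂ hlt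
      obtain ⟨hv₁C, -⟩ := h₁
      obtain ⟨hv₂C, c₂, hc₂, hadj₂⟩ := h₂
      obtain ⟨hne₂, hcs⟩ := hadj₂
      have hc₂v : v₁.val < c₂.val := by
        rcases hcs with ⟨-, h'⟩ | ⟨h', -⟩ | ⟨h', -⟩
        · omega
        · rcases Nat.lt_or_ge v₁.val c₂.val with h | h
          · exact h
          · exact absurd (Fin.ext (by omega : c₂.val = v₁.val)) (fun hEq => hv₁C (hEq ▸ hc₂))
        · omega
      obtain ⟨m, hmC, hmv⟩ := cross c₂ c0 hc₂ hc0 v₁.val hv₁ (le_of_lt hc₂v) (by omega)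
      exact hv₁C ((Fin.ext hmv : m = v₁) ▸ hmC)
    have hsplit : B ⊆ (({v : Fin n | v.val < b-1}) \ {c0}) ∪ {v ∈ B | b-1 ≤ v.val} := by
      intro v hv
      rcases Nat.lt_or_ge v.val (b-1) with h | h
      · exact Or.inl ⟨h, fun hEq => hv.1 (by rwa [Set.mem_singleton_iff.mp hEq])⟩
      · exact Or.inr ⟨hv, h⟩
    have hcard1 : ({v : Fin n | v.val < b-1}).ncard = b-1 := by
      apply Set.ncard_eq_of_bijective (fun i hi => (⟨i, by omega⟩ : Fin n))
      · intro a ha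
        exact ⟨a.val, ha, Fin.ext rfl⟩
      · intro i hi
        exact hi
      · intro i j hi hj hEq
        exact congrArg Fin.val hEq
    have hsub : ∀ v₁ ∈ {v ∈ B | b-1 ≤ v.val}, ∀ v₂ ∈ {v ∈ B | b-1 ≤ v.val}, v₁ = v₂ := by
      intro v₁ h₁ v₂ h₂
      rcases lt_trichotomy v₁.val v₂.val with h | h | h
      · exact absurd (hB2 v₁ h₁.1 v₂ h₂.1 h₁.2 h₂.2 h) not_false
      · exact Fin.ext h
      · exact absurd (hB2 v₂ h₂.1 v₁ h₁.1 h₂.2 h₁.2 h) not_false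
    calc B.ncard ≤ (({v : Fin n | v.val < b-1}) \ {c0} ∪ {v ∈ B | b-1 ≤ v.val}).ncard :=
          Set.ncard_le_ncard hsplit (Set.toFinite _)
      _ ≤ (({v : Fin n | v.val < b-1}) \ {c0}).ncard + ({v ∈ B | b-1 ≤ v.val}).ncard :=
          Set.ncard_union_le _ _
      _ ≤ (b-1-1) + 1 := by
          gcongr
          · rw [Set.ncard_diff_singleton_of_mem (show c0 ∈ {v : Fin n | v.val < b-1} from hc0v), hcard1]
          · exact ncard_le_one_of_subsingleton (fun x hx y hy => hsub x hx y hy)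
      _ ≤ b-1 := by omega
  · push_neg at hcase
    have habove : ∀ v₁ ∈ B, ∀ v₂ ∈ B, (∃ c ∈ C, c.val + 1 = v₁.val) →
        (∃ c ∈ C, c.val + 1 = v₂.val) → v₁.val < v₂.val → False := by
      intro v₁ h₁ v₂ h₂ ⟨c₁, hc₁, hcv₁⟩ ⟨c₂, hc₂, hcv₂⟩ hlt
      have hb1 : b-1 ≤ v₁.val := by have := hcase c₁ hc₁; omega
      have hc₂v : v₁.val < c₂.val := by
        rcases Nat.lt_or_ge v₁.val c₂.val with h | h
        · exact h
        · exact absurd (Fin.ext (by omega : c₂.val = v₁.val)) (fun hEq => h₁.1 (hEq ▸ hc₂))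
      obtain ⟨m, hmC, hmv⟩ := cross c₂ c₁ hc₂ hc₁ v₁.val hb1 (le_of_lt hc₂v) (by omega)
      exact h₁.1 ((Fin.ext hmv : m = v₁) ▸ hmC)
    have hbelow : ∀ v₁ ∈ B, ∀ v₂ ∈ B, (∃ c ∈ C, v₁.val + 1 = c.val) →
        (∃ c ∈ C, v₂.val + 1 = c.val) → v₁.val < v₂.val → False := by
      intro v₁ h₁ v₂ h₂ ⟨c₁, hc₁, hcv₁⟩ ⟨c₂, hc₂, hcv₂⟩ hlt
      have hb1 : b-1 ≤ v₂.val := by have := hcase c₁ hc₁; omega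
      have hc₁v : c₁.val < v₂.val := by
        rcases Nat.lt_or_ge c₁.val v₂.val with h | h
        · exact h
        · exact absurd (Fin.ext (by omega : c₁.val = v₂.val)) (fun hEq => h₂.1 (hEq ▸ hc₁))
      obtain ⟨m, hmC, hmv⟩ := cross c₂ c₁ hc₂ hc₁ v₂.val hb1 (by omega) hc₁v
      exact h₂.1 ((Fin.ext hmv : m = v₂) ▸ hmC)
    have hsplit : B ⊆ {v ∈ B | ∃ c ∈ C, c.val + 1 = v.val} ∪
        {v ∈ B | ∃ c ∈ C, v.val + 1 = c.val} := by
      intro v hv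
      obtain ⟨hvC, c, hc, hne', hcs⟩ := hv
      rcases hcs with ⟨h', -⟩ | ⟨h', h''⟩ | ⟨h', h''⟩
      · exact absurd (hcase c hc) (by omega)
      · exact Or.inl ⟨⟨hvC, c, hc, hne', Or.inr (Or.inl ⟨h', h''⟩)⟩, c, hc, h'⟩
      · exact Or.inr ⟨⟨hvC, c, hc, hne', Or.inr (Or.inr ⟨h', h''⟩)⟩, c, hc, h'⟩
    have h1 : ({v ∈ B | ∃ c ∈ C, c.val + 1 = v.val}).ncard ≤ 1 := by
      apply ncard_le_one_of_subsingleton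
      intro v₁ h₁ v₂ h₂
      rcases lt_trichotomy v₁.val v₂.val with h | h | h
      · exact absurd (habove v₁ h₁.1 v₂ h₂.1 h₁.2 h₂.2 h) not_false
      · exact Fin.ext h
      · exact absurd (habove v₂ h₂.1 v₁ h₁.1 h₂.2 h₁.2 h) not_false
    have h2 : ({v ∈ B | ∃ c ∈ C, v.val + 1 = c.val}).ncard ≤ 1 := by
      apply ncard_le_one_of_subsingleton
      intro v₁ h₁ v₂ h₂
      rcases lt_trichotomy v₁.val v₂.val with h | h | h
      · exact absurd (hbelow v₁ h₁.1 v₂ h₂.1 h₁.2 h₂.2 h) not_false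
      · exact Fin.ext h
      · exact absurd (hbelow v₂ h₂.1 v₁ h₁.1 h₂.2 h₁.2 h) not_false
    calc B.ncard ≤ _ := Set.ncard_le_ncard hsplit (Set.toFinite _)
      _ ≤ _ := Set.ncard_union_le _ _
      _ ≤ 1 + 1 := by gcongr
      _ ≤ b-1 := by omega


lemma Hgr_minor_free {n b : ℕ} (hb : 3 ≤ b) (hn : b ≤ n) : kabMinorFree 1 b (Hgr n b) := by
  rintro ⟨f, hne, hconn, hdisj, hadj⟩
  set C := f (Sum.inl 0) with hCdef
  have pick : ∀ i : Fin b, ∃ zz, zz ∈ f (Sum.inr i) ∧ zz ∉ C ∧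
      ∃ c ∈ C, (Hgr n b).Adj c zz := by
    intro i
    obtain ⟨c, hc, zz, hz, hadj'⟩ := hadj (Sum.inl 0) (Sum.inr i) (by simp)
    refine ⟨zz, hz, fun hzC => ?_, c, hc, hadj'⟩
    exact Set.disjoint_left.mp (hdisj (Sum.inl 0) (Sum.inr i) (by simp)) hzC hz
  choose z hz1 hz2 hz3 using pick
  have hzinj : Function.Injective z := by
    intro i j hij
    by_contra hne'
    exact Set.disjoint_left.mp (hdisj (Sum.inr i) (Sum.inr j) (by simp [hne'])) (hz1 i)
      (hij ▸ hz1 j)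
  have himg : Set.range z ⊆ {v : Fin n | v ∉ C ∧ ∃ c ∈ C, (Hgr n b).Adj c v} := by
    rintro v ⟨i, rfl⟩
    exact ⟨hz2 i, hz3 i⟩
  have hcard := Hgr_boundary hb hn C (hconn (Sum.inl 0))
  have hrange : (Set.range z).ncard = b := by
    rw [← Set.image_univ, Set.ncard_image_of_injective _ hzinj, Set.ncard_univ,
      Nat.card_eq_fintype_card, Fintype.card_fin]
  have := Set.ncard_le_ncard himg (Set.toFinite _)
  omega


lemma b2_lt_lambdaAlpha_Hgr {n b : ℕ} (hb : 3 ≤ b) (hn : b ≤ n)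
    {α : ℝ} (hα0 : 0 ≤ α) (hα1 : α < 1) :
    (b : ℝ) - 2 < lambdaAlpha (Hgr n b) α := by
  have hn0 : 0 < n := by omega
  have h1α : (0:ℝ) < 1 - α := by linarith
  have hbR : (3:ℝ) ≤ (b:ℝ) := by exact_mod_cast hb
  have hbpos : (0:ℝ) < (b:ℝ) := by linarith
  set ε : ℝ := (1 - α) / b with hε
  have hε0 : 0 < ε := div_pos h1α hbpos
  have hεb : ε * b = 1 - α := div_mul_cancel₀ _ (ne_of_gt hbpos)
  have hpb : b - 1 < n := by omega
  set p : Fin n := ⟨b-1, hpb⟩ with hp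
  set q0 : Fin n := ⟨b-2, by omega⟩ with hq0
  set y : Fin n → ℝ := fun v => if v.val < b-1 then 1 else if v.val = b-1 then ε else 0 with hy
  set M := aMatrix (Hgr n b) α with hM
  set cliqueF : Finset (Fin n) := Finset.univ.filter (fun v => v.val < b-1) with hcF
  have hq0mem : q0 ∈ cliqueF := by
    simp only [hcF, Finset.mem_filter, Finset.mem_univ, true_and, hq0]
    omega
  have hpnot : p ∉ cliqueF := by
    simp only [hcF, Finset.mem_filter, Finset.mem_univ, true_and, hp]
    omega
  have hcFcard : cliqueF.card = b - 1 := by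
    apply Finset.card_eq_of_bijective (fun i hi => (⟨i, by omega⟩ : Fin n))
    · intro a ha
      simp only [hcF, Finset.mem_filter] at ha
      exact ⟨a.val, ha.2, Fin.ext rfl⟩
    · intro i hi
      simp only [hcF, Finset.mem_filter, Finset.mem_univ, true_and]
      exact hi
    · intro i j hi hj hEq
      exact congrArg Fin.val hEq
  have hynn : ∀ v, 0 ≤ y v := by
    intro v
    simp only [hy]
    split_ifs
    · norm_num
    · exact le_of_lt hε0
    · exact le_refl 0
  have hyclique : ∀ v ∈ cliqueF, y v = 1 := by
    intro v hv
    simp only [hcF, Finset.mem_filter] at hv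
    simp [hy, hv.2]
  have hyp : y p = ε := by
    simp only [hy, hp]
    norm_num
  have hdegnn : ∀ v : Fin n, (0:ℝ) ≤ ∑ z, (if (Hgr n b).Adj v z then (1:ℝ) else 0) :=
    fun v => Finset.sum_nonneg fun z _ => by split <;> norm_num
  have hMnn : ∀ u w, 0 ≤ M u w := by
    intro u w
    have h1 := hdegnn w
    simp only [hM, aMatrix, Matrix.of_apply]
    have h2 : (0:ℝ) ≤ α * ∑ z, (if (Hgr n b).Adj w z then (1:ℝ) else 0) :=
      mul_nonneg hα0 h1
    split_ifs <;> linarith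
  have hmv : ∀ v, (M *ᵥ y) v = ∑ w, M v w * y w := fun v => rfl
  have hMvnn : ∀ v, 0 ≤ (M *ᵥ y) v := by
    intro v
    rw [hmv]
    exact Finset.sum_nonneg fun w _ => mul_nonneg (hMnn v w) (hynn w)
  have hadjc : ∀ v ∈ cliqueF, ∀ w ∈ cliqueF, w ≠ v → (Hgr n b).Adj v w := by
    intro v hv w hw hne
    simp only [hcF, Finset.mem_filter] at hv hw
    exact ⟨hne.symm, Or.inl ⟨hv.2, hw.2⟩⟩
  have hMdiag : ∀ v : Fin n, M v v = α * ∑ z, (if (Hgr n b).Adj v z then (1:ℝ) else 0) := by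
    intro v
    simp [hM, aMatrix, (Hgr n b).irrefl]
  have hMoff : ∀ v w : Fin n, v ≠ w → (Hgr n b).Adj v w → M v w = 1 - α := by
    intro v w hne hadj
    simp [hM, aMatrix, hne, hadj]
  have hdeg : ∀ v ∈ cliqueF, ((b:ℝ) - 2) ≤ ∑ z, (if (Hgr n b).Adj v z then (1:ℝ) else 0) := by
    intro v hv
    have h1 : ∑ z ∈ cliqueF.erase v, (if (Hgr n b).Adj v z then (1:ℝ) else 0)
        ≤ ∑ z, (if (Hgr n b).Adj v z then (1:ℝ) else 0) :=
      Finset.sum_le_sum_of_subset_of_nonneg (Finset.subset_univ _)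
        (fun i _ _ => by split <;> norm_num)
    have hterm : ∀ z ∈ cliqueF.erase v, (if (Hgr n b).Adj v z then (1:ℝ) else 0) = 1 :=
      fun z hz => if_pos (hadjc v hv z (Finset.mem_of_mem_erase hz) (Finset.ne_of_mem_erase hz))
    have h2 : ∑ z ∈ cliqueF.erase v, (if (Hgr n b).Adj v z then (1:ℝ) else 0) = ((b:ℝ) - 2) := by
      rw [Finset.sum_congr rfl hterm]
      rw [Finset.sum_const, Finset.card_erase_of_mem hv, hcFcard, nsmul_eq_mul, mul_one]
      have h3 : b - 1 - 1 = b - 2 := by omega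
      rw [h3, Nat.cast_sub (by omega : 2 ≤ b)]
      norm_num
    linarith
  -- core clique sum bound
  have hcsum : ∀ v ∈ cliqueF, ((b:ℝ) - 2) ≤ ∑ w ∈ cliqueF, M v w * y w := by
    intro v hv
    have hsplit : ∑ w ∈ cliqueF, M v w * y w
        = M v v * y v + ∑ w ∈ cliqueF.erase v, M v w * y w :=
      (Finset.add_sum_erase _ _ hv).symm
    have hdiagterm : α * ((b:ℝ)-2) ≤ M v v * y v := by
      rw [hMdiag v, hyclique v hv, mul_one]
      exact mul_le_mul_of_nonneg_left (hdeg v hv) hα0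
    have hterm : ∀ w ∈ cliqueF.erase v, M v w * y w = 1 - α := by
      intro w hw
      rw [hMoff v w (Finset.ne_of_mem_erase hw).symm
        (hadjc v hv w (Finset.mem_of_mem_erase hw) (Finset.ne_of_mem_erase hw)),
        hyclique w (Finset.mem_of_mem_erase hw), mul_one]
    have hoffsum : ∑ w ∈ cliqueF.erase v, M v w * y w = ((b:ℝ)-2) * (1-α) := by
      rw [Finset.sum_congr rfl hterm, Finset.sum_const, Finset.card_erase_of_mem hv, hcFcard,
        nsmul_eq_mul]
      have h3 : b - 1 - 1 = b - 2 := by omega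
      rw [h3, Nat.cast_sub (by omega : 2 ≤ b)]
      norm_num
    rw [hsplit, hoffsum]
    nlinarith
  have hadjq0p : (Hgr n b).Adj q0 p := by
    refine ⟨fun hEq => ?_, Or.inr (Or.inl ⟨?_, ?_⟩)⟩
    · have := congrArg Fin.val hEq
      simp only [hq0, hp] at this
      omega
    · show (b-2) + 1 = b-1
      omega
    · exact le_refl _
  have hMq0p : M q0 p = 1 - α := hMoff q0 p hadjq0p.ne hadjq0p
  -- bound for the q0 row
  have hq0_bound : ((b:ℝ)-2) + (1-α) * ε ≤ (M *ᵥ y) q0 := by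
    have hsub : ∑ w ∈ insert p cliqueF, M q0 w * y w ≤ (M *ᵥ y) q0 := by
      rw [hmv]
      exact Finset.sum_le_sum_of_subset_of_nonneg (Finset.subset_univ _)
        (fun i _ _ => mul_nonneg (hMnn q0 i) (hynn i))
    rw [Finset.sum_insert hpnot, hMq0p, hyp] at hsub
    have := hcsum q0 hq0mem
    linarith
  -- bound for the other clique rows
  have hclique_bound : ∀ v ∈ cliqueF, ((b:ℝ)-2) ≤ (M *ᵥ y) v := by
    intro v hv
    have hsub : ∑ w ∈ cliqueF, M v w * y w ≤ (M *ᵥ y) v := by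
      rw [hmv]
      exact Finset.sum_le_sum_of_subset_of_nonneg (Finset.subset_univ _)
        (fun i _ _ => mul_nonneg (hMnn v i) (hynn i))
    linarith [hcsum v hv]
  -- bound for the p row
  have hp_bound : (1-α) ≤ (M *ᵥ y) p := by
    have h1 : M p q0 * y q0 ≤ (M *ᵥ y) p := by
      rw [hmv]
      exact Finset.single_le_sum (f := fun w => M p w * y w)
        (fun i _ => mul_nonneg (hMnn p i) (hynn i)) (Finset.mem_univ q0)
    rw [hMoff p q0 hadjq0p.ne.symm hadjq0p.symm, hyclique q0 hq0mem, mul_one] at h1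
    exact h1
  -- total lower bound
  have htotal : ((b:ℝ)-1)*((b:ℝ)-2) + 2*(1-α)*ε ≤ y ⬝ᵥ (M *ᵥ y) := by
    have hdot : y ⬝ᵥ (M *ᵥ y) = ∑ v, y v * (M *ᵥ y) v := rfl
    have hsub : ∑ v ∈ insert p cliqueF, y v * (M *ᵥ y) v ≤ y ⬝ᵥ (M *ᵥ y) := by
      rw [hdot]
      exact Finset.sum_le_sum_of_subset_of_nonneg (Finset.subset_univ _)
        (fun i _ _ => mul_nonneg (hynn i) (hMvnn i))
    rw [Finset.sum_insert hpnot] at hsub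
    have h1 : ∑ v ∈ cliqueF, y v * (M *ᵥ y) v = ∑ v ∈ cliqueF, (M *ᵥ y) v :=
      Finset.sum_congr rfl (fun v hv => by rw [hyclique v hv, one_mul])
    have h2 : ∑ v ∈ cliqueF, (M *ᵥ y) v
        = (M *ᵥ y) q0 + ∑ v ∈ cliqueF.erase q0, (M *ᵥ y) v :=
      (Finset.add_sum_erase _ _ hq0mem).symm
    have h3 : ((b:ℝ)-2) * ((b:ℝ)-2) ≤ ∑ v ∈ cliqueF.erase q0, (M *ᵥ y) v := by
      have := Finset.card_nsmul_le_sum (cliqueF.erase q0) (fun v => (M *ᵥ y) v) ((b:ℝ)-2)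
        (fun v hv => hclique_bound v (Finset.mem_of_mem_erase hv))
      rw [Finset.card_erase_of_mem hq0mem, hcFcard, nsmul_eq_mul] at this
      have h4 : b - 1 - 1 = b - 2 := by omega
      rw [h4, Nat.cast_sub (by omega : 2 ≤ b)] at this
      norm_num at this
      linarith [this]
    have h5 : ε * (1-α) ≤ y p * (M *ᵥ y) p := by
      rw [hyp]
      exact mul_le_mul_of_nonneg_left hp_bound (le_of_lt hε0)
    rw [h1, h2] at hsub
    nlinarith [hq0_bound, h3, h5, hsub]
  -- y ⬝ᵥ y
  have hyy : y ⬝ᵥ y = ((b:ℝ)-1) + ε*ε := by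
    have hrepr : y ⬝ᵥ y
        = ∑ i ∈ Finset.range n, ((fun i : ℕ => (if i < b-1 then (1:ℝ)
            else if i = b-1 then ε else 0) * (if i < b-1 then (1:ℝ)
            else if i = b-1 then ε else 0)) i) := by
      rw [← Fin.sum_univ_eq_sum_range]
      rfl
    rw [hrepr, ← Finset.sum_range_add_sum_Ico _ (by omega : b-1 ≤ n),
      Finset.sum_eq_sum_Ico_succ_bot (by omega : b-1 < n)]
    have e1 : ∑ i ∈ Finset.range (b-1), ((fun i : ℕ => (if i < b-1 then (1:ℝ)
        else if i = b-1 then ε else 0) * (if i < b-1 then (1:ℝ)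
        else if i = b-1 then ε else 0)) i) = ((b:ℝ)-1) := by
      have hterm : ∀ i ∈ Finset.range (b-1), ((fun i : ℕ => (if i < b-1 then (1:ℝ)
          else if i = b-1 then ε else 0) * (if i < b-1 then (1:ℝ)
          else if i = b-1 then ε else 0)) i) = 1 := by
        intro i hi
        have := Finset.mem_range.mp hi
        simp [this]
      rw [Finset.sum_congr rfl hterm, Finset.sum_const, Finset.card_range,
        nsmul_eq_mul, mul_one, Nat.cast_sub (by omega : 1 ≤ b)]
      norm_num
    have e3 : ∑ i ∈ Finset.Ico (b-1+1) n, ((fun i : ℕ => (if i < b-1 then (1:ℝ)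
        else if i = b-1 then ε else 0) * (if i < b-1 then (1:ℝ)
        else if i = b-1 then ε else 0)) i) = 0 := by
      apply Finset.sum_eq_zero
      intro i hi
      have := (Finset.mem_Ico.mp hi).1
      have h6 : ¬ (i < b-1) := by omega
      have h7 : ¬ (i = b-1) := by omega
      simp [h6, h7]
    rw [e1, e3]
    norm_num
  -- conclude
  apply lt_lambdaAlpha_of_rayleigh hn0 _ _ _ y
  · rw [hyy]; nlinarith
  · rw [hyy, ← hM]
    have key : ((b:ℝ)-2) * (ε*ε) < 2*(1-α)*ε := by
      nlinarith [mul_pos hε0 hε0, hεb]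
    nlinarith [htotal]


/-- Local structure around the maximal Perron-entry vertex `v*` of an
`A_α`-extremal connected `K_{1,b}`-minor free graph: with
`U = N(v*)`, `U₁ = {v ∈ U : d_U(v) = b-2}`, `U₂ = U ∖ U₁`,
`W = V ∖ (U ∪ {v*})` and `N²(v*) = {w ∈ W : dist(v*,w) = 2}`, a vertex of
`U₁` has no neighbour in `W`, a vertex of `U₂ ∪ N²(v*)` has at most one, and
a vertex of `W ∖ N²(v*)` has at most two. -/
theorem extremal_K1b_neighbors_in_W
    (n b : ℕ) (hn : b ≤ n) (hb : 3 ≤ b)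
    (α : ℝ) (hα0 : 0 ≤ α) (hα1 : α < 1)
    (G : SimpleGraph (Fin n)) (hconn : G.Connected) (hfree : kabMinorFree 1 b G)
    (hmax : ∀ H : SimpleGraph (Fin n), H.Connected → kabMinorFree 1 b H →
      lambdaAlpha H α ≤ lambdaAlpha G α)
    (x : Fin n → ℝ) (hx : ∀ v, 0 < x v)
    (heig : (aMatrix G α).mulVec x = lambdaAlpha G α • x)
    (vstar : Fin n) (hvstar : ∀ u, x u ≤ x vstar) :
    (∀ v ∈ G.neighborSet vstar,
        degIn G (G.neighborSet vstar) v = b - 2 →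
        degIn G ((G.neighborSet vstar ∪ {vstar})ᶜ) v = 0) ∧
    (∀ v : Fin n,
        ((v ∈ G.neighborSet vstar ∧ degIn G (G.neighborSet vstar) v ≠ b - 2) ∨
         (v ∈ ((G.neighborSet vstar ∪ {vstar})ᶜ : Set (Fin n)) ∧ G.dist vstar v = 2)) →
        degIn G ((G.neighborSet vstar ∪ {vstar})ᶜ) v ≤ 1) ∧
    (∀ v ∈ ((G.neighborSet vstar ∪ {vstar})ᶜ : Set (Fin n)), G.dist vstar v ≠ 2 →
        degIn G ((G.neighborSet vstar ∪ {vstar})ᶜ) v ≤ 2) := by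
  have hn0 : 0 < n := by omega
  set U : Set (Fin n) := G.neighborSet vstar with hUdef
  set Wset : Set (Fin n) := (U ∪ {vstar})ᶜ with hWdef
  -- facts about membership
  have hvstarU : vstar ∉ U := fun h => G.irrefl h
  have hvstarW : vstar ∉ Wset := fun h => h (Or.inr rfl)
  have hWU : ∀ w ∈ Wset, w ∉ U := fun w hw h => hw (Or.inl h)
  have hWne : ∀ w ∈ Wset, w ≠ vstar := fun w hw h => hw (Or.inr h)
  -- Step 1: spectral radius exceeds b-2
  have hlam : (b:ℝ) - 2 < lambdaAlpha G α :=
    lt_of_lt_of_le (b2_lt_lambdaAlpha_Hgr hb hn hα0 hα1)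
      (hmax (Hgr n b) (Hgr_connected hb hn) (Hgr_minor_free hb hn))
  -- Step 2: the degree of vstar is at least b-1
  have hUcard : b - 1 ≤ U.ncard := by
    set D : ℝ := ∑ z, (if G.Adj vstar z then (1:ℝ) else 0) with hD
    have hrow := congrFun heig vstar
    have hrow1 : (aMatrix G α *ᵥ x) vstar = ∑ w, aMatrix G α vstar w * x w := rfl
    have hrow2 : (lambdaAlpha G α • x) vstar = lambdaAlpha G α * x vstar := rfl
    have hsplit : ∑ w, aMatrix G α vstar w * x w
        = (∑ w, (if vstar = w then α * ∑ z, (if G.Adj w z then (1:ℝ) else 0) else 0) * x w)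
          + ∑ w, (if G.Adj vstar w then (1-α) else 0) * x w := by
      rw [← Finset.sum_add_distrib]
      apply Finset.sum_congr rfl
      intro w _
      show (_ + _) * x w = _
      ring
    have hfirst : (∑ w, (if vstar = w then α * ∑ z, (if G.Adj w z then (1:ℝ) else 0) else 0) * x w)
        = α * D * x vstar := by
      have : ∀ w : Fin n, (if vstar = w then α * ∑ z, (if G.Adj w z then (1:ℝ) else 0) else 0) * x w
          = (if vstar = w then α * (∑ z, (if G.Adj w z then (1:ℝ) else 0)) * x w else 0) := by
        intro w
        split_ifs <;> ring
      rw [Finset.sum_congr rfl (fun w _ => this w), Finset.sum_ite_eq Finset.univ vstar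
        (fun w => α * (∑ z, (if G.Adj w z then (1:ℝ) else 0)) * x w), if_pos (Finset.mem_univ _)]
    have hsecond : ∑ w, (if G.Adj vstar w then (1-α) else 0) * x w ≤ (1-α) * D * x vstar := by
      have hterm : ∀ w : Fin n, (if G.Adj vstar w then (1-α) else 0) * x w
          ≤ (if G.Adj vstar w then (1:ℝ) else 0) * ((1-α) * x vstar) := by
        intro w
        split_ifs with h
        · rw [one_mul]
          have := hvstar w
          nlinarith [hx w]
        · simp
      calc ∑ w, (if G.Adj vstar w then (1-α) else 0) * x w
          ≤ ∑ w, (if G.Adj vstar w then (1:ℝ) else 0) * ((1-α) * x vstar) :=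
            Finset.sum_le_sum (fun w _ => hterm w)
        _ = D * ((1-α) * x vstar) := by rw [← Finset.sum_mul]
        _ = (1-α) * D * x vstar := by ring
    have hlamD : lambdaAlpha G α ≤ D := by
      have h1 : lambdaAlpha G α * x vstar ≤ D * x vstar := by
        rw [← hrow2, ← hrow, hrow1, hsplit, hfirst]
        nlinarith [hsecond]
      exact le_of_mul_le_mul_right h1 (hx vstar)
    have hDcard : D = ((Finset.univ.filter (fun z => G.Adj vstar z)).card : ℝ) := by
      rw [hD, Finset.sum_boole]
    have hbD : (b:ℝ) - 2 < D := lt_of_lt_of_le hlam hlamD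
    have hcardb : b - 1 ≤ (Finset.univ.filter (fun z => G.Adj vstar z)).card := by
      rw [hDcard] at hbD
      have : (b:ℝ) < ((Finset.univ.filter (fun z => G.Adj vstar z)).card : ℝ) + 2 := by
        linarith
      have h2 : b < (Finset.univ.filter (fun z => G.Adj vstar z)).card + 2 := by
        exact_mod_cast this
      omega
    have hUeq : U.ncard = (Finset.univ.filter (fun z => G.Adj vstar z)).card := by
      rw [Set.ncard_eq_toFinset_card']
      congr 1
      ext z
      simp only [Set.mem_toFinset, Finset.mem_filter, Finset.mem_univ, true_and]
      exact Iff.rfl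
    omega
  -- generic minor builder
  have build : ∀ (C S : Set (Fin n)), (G.induce C).Connected → b ≤ S.ncard →
      (∀ s ∈ S, s ∉ C) → (∀ s ∈ S, ∃ c ∈ C, G.Adj c s) → False := by
    intro C S hC hS hSC hSadj
    obtain ⟨l, hl1, hl2⟩ := exists_inj_of_le_ncard hS (Set.toFinite S)
    exact hfree (k1b_minor G C hC l hl1 (fun i => hSC _ (hl2 i)) (fun i => hSadj _ (hl2 i)))
  refine ⟨?_, ?_, ?_⟩
  · -- Claim 1
    intro v hvU hdU
    by_contra h0
    have hpos : (G.neighborSet v ∩ Wset).Nonempty := by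
      rw [← Set.ncard_pos (Set.toFinite _)]
      exact Nat.pos_of_ne_zero h0
    obtain ⟨w, hwN, hwW⟩ := hpos
    set A := G.neighborSet v ∩ U with hA
    have hAcard : A.ncard = b - 2 := hdU
    have hwv : w ≠ v := fun h => G.irrefl (h ▸ hwN)
    have hvvstar : v ≠ vstar := fun h => hvstarU (h ▸ hvU)
    have hwne : w ≠ vstar := hWne w hwW
    have hwnU : w ∉ U := hWU w hwW
    set S : Set (Fin n) := insert vstar (insert w A) with hS
    have hScard : S.ncard = b := by
      rw [hS, Set.ncard_insert_of_notMem, Set.ncard_insert_of_notMem, hAcard]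
      · omega
      · exact fun h => hwnU h.2
      · rintro (h | h)
        · exact hwne h.symm
        · exact hvstarU h.2
    apply build {v} S (induce_singleton_connected G v) (le_of_eq hScard.symm)
    · rintro s (rfl | rfl | hsA)
      · exact fun h => hvvstar (Set.mem_singleton_iff.mp h).symm
      · exact fun h => hwv (Set.mem_singleton_iff.mp h)
      · intro h
        exact G.irrefl ((Set.mem_singleton_iff.mp h) ▸ hsA.1)
    · rintro s (rfl | rfl | hsA)
      · exact ⟨v, rfl, ((SimpleGraph.mem_neighborSet _ _ _).mp hvU).symm⟩
      · exact ⟨v, rfl, hwN⟩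
      · exact ⟨v, rfl, hsA.1⟩
  · -- Claim 2
    intro v hv
    by_contra h1
    push_neg at h1
    have h2 : 2 ≤ (G.neighborSet v ∩ Wset).ncard := h1
    obtain ⟨l, hlinj, hlmem⟩ := exists_inj_of_le_ncard h2 (Set.toFinite _)
    set w₁ := l 0 with hw₁
    set w₂ := l 1 with hw₂
    have hne12 : w₁ ≠ w₂ := fun h => by simpa using hlinj h
    have hw₁m := hlmem 0
    have hw₂m := hlmem 1
    rcases hv with ⟨hvU, -⟩ | ⟨hvW, hdist⟩
    · -- v ∈ U
      have hadj : G.Adj vstar v := hvU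
      set C : Set (Fin n) := {m | m ∈ (SimpleGraph.Walk.cons hadj SimpleGraph.Walk.nil).support}
        with hC
      have hCconn := induce_support_connected (SimpleGraph.Walk.cons hadj SimpleGraph.Walk.nil)
      have hCsub : ∀ m ∈ C, m = vstar ∨ m = v := by
        intro m hm
        simpa [hC, SimpleGraph.Walk.support] using hm
      have hvstarC : vstar ∈ C := by simp [hC, SimpleGraph.Walk.support]
      have hvC : v ∈ C := by simp [hC, SimpleGraph.Walk.support]
      set S : Set (Fin n) := insert w₁ (insert w₂ (U \ {v})) with hS
      have hScard : b ≤ S.ncard := by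
        rw [hS, Set.ncard_insert_of_notMem, Set.ncard_insert_of_notMem,
          Set.ncard_diff_singleton_of_mem hvU]
        · omega
        · exact fun h => hWU _ hw₂m.2 h.1
        · rintro (h | h)
          · exact hne12 h
          · exact hWU _ hw₁m.2 h.1
      apply build C S hCconn hScard
      · rintro s (rfl | rfl | hsU) hsC
        · rcases hCsub _ hsC with h | h
          · exact hWne _ hw₁m.2 h
          · exact hWU _ hw₁m.2 (by rw [← hw₁, h]; exact hvU)
        · rcases hCsub _ hsC with h | h
          · exact hWne _ hw₂m.2 h
          · exact hWU _ hw₂m.2 (by rw [← hw₂, h]; exact hvU)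
        · rcases hCsub _ hsC with h | h
          · exact hvstarU (h ▸ hsU.1)
          · exact hsU.2 h
      · rintro s (rfl | rfl | hsU)
        · exact ⟨v, hvC, hw₁m.1⟩
        · exact ⟨v, hvC, hw₂m.1⟩
        · exact ⟨vstar, hvstarC, hsU.1⟩
    · -- v ∈ N²(vstar)
      obtain ⟨p, hplen⟩ := (hconn.preconnected vstar v).exists_walk_length_eq_dist
      rw [hdist] at hplen
      have hadj1 : G.Adj vstar (p.getVert 1) := by
        have := p.adj_getVert_succ (by omega : 0 < p.length)
        rwa [p.getVert_zero] at this
      have hadj2 : G.Adj (p.getVert 1) v := by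
        have := p.adj_getVert_succ (by omega : 1 < p.length)
        have h2 : p.getVert 2 = v := by
          have := p.getVert_length
          rwa [hplen] at this
        rwa [h2] at this
      set u := p.getVert 1 with hu
      have huU : u ∈ U := hadj1
      set q := SimpleGraph.Walk.cons hadj1 (SimpleGraph.Walk.cons hadj2 SimpleGraph.Walk.nil)
        with hq
      set C : Set (Fin n) := {m | m ∈ q.support} with hC
      have hCconn := induce_support_connected q
      have hCsub : ∀ m ∈ C, m = vstar ∨ m = u ∨ m = v := by
        intro m hm
        simpa [hC, hq, SimpleGraph.Walk.support] using hm
      have hvstarC : vstar ∈ C := by simp [hC, hq, SimpleGraph.Walk.support]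
      have hvC : v ∈ C := by simp [hC, hq, SimpleGraph.Walk.support]
      have hvnU : v ∉ U := hWU v hvW
      set S : Set (Fin n) := insert w₁ (insert w₂ (U \ {u})) with hS
      have hScard : b ≤ S.ncard := by
        rw [hS, Set.ncard_insert_of_notMem, Set.ncard_insert_of_notMem,
          Set.ncard_diff_singleton_of_mem huU]
        · omega
        · exact fun h => hWU _ hw₂m.2 h.1
        · rintro (h | h)
          · exact hne12 h
          · exact hWU _ hw₁m.2 h.1
      apply build C S hCconn hScard
      · have hwgen : ∀ w', w' ∈ G.neighborSet v ∩ Wset → w' ∉ C := by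
          intro w' hw' hc
          rcases hCsub _ hc with h | h | h
          · exact hWne _ hw'.2 h
          · exact hWU _ hw'.2 (h ▸ huU)
          · exact G.irrefl (h ▸ hw'.1)
        rintro s (rfl | rfl | hsU) hsC
        · exact hwgen _ hw₁m hsC
        · exact hwgen _ hw₂m hsC
        · rcases hCsub _ hsC with h | h | h
          · exact hvstarU (h ▸ hsU.1)
          · exact hsU.2 h
          · exact hvnU (h ▸ hsU.1)
      · rintro s (rfl | rfl | hsU)
        · exact ⟨v, hvC, hw₁m.1⟩
        · exact ⟨v, hvC, hw₂m.1⟩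
        · exact ⟨vstar, hvstarC, hsU.1⟩
  · -- Claim 3
    intro v hvW hdist
    by_contra h1
    push_neg at h1
    have h3 : 3 ≤ (G.neighborSet v ∩ Wset).ncard := h1
    have hvnU : v ∉ U := hWU v hvW
    have hvne : v ≠ vstar := hWne v hvW
    have hd3 : 3 ≤ G.dist vstar v := by
      have h0 : 0 < G.dist vstar v := hconn.pos_dist_of_ne (Ne.symm hvne)
      have hne1 : G.dist vstar v ≠ 1 := by
        intro h
        exact hvnU (SimpleGraph.dist_eq_one_iff_adj.mp h)
      omega
    obtain ⟨p, hplen⟩ := (hconn.preconnected vstar v).exists_walk_length_eq_dist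
    set d := G.dist vstar v with hd
    have hadj1 : G.Adj vstar (p.getVert 1) := by
      have := p.adj_getVert_succ (by omega : 0 < p.length)
      rwa [p.getVert_zero] at this
    set u₁ := p.getVert 1 with hu₁
    have huU : u₁ ∈ U := hadj1
    set z := p.getVert (d-1) with hz
    set C : Set (Fin n) := {m | m ∈ p.support} with hC
    have hCconn := induce_support_connected p
    have hvstarC : vstar ∈ C := p.start_mem_support
    have hvC : v ∈ C := p.end_mem_support
    -- any U-vertex on the path is u₁
    have hCU : ∀ c ∈ C, c ∈ U → c = u₁ := by
      intro c hc hcU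
      obtain ⟨q, r, hqr⟩ := SimpleGraph.Walk.mem_support_iff_exists_append.mp hc
      have hlen : p.length = q.length + r.length := by
        rw [hqr, SimpleGraph.Walk.length_append]
      have hdist1 : G.dist vstar c = 1 := SimpleGraph.dist_eq_one_iff_adj.mpr hcU
      have htri : d ≤ 1 + r.length := by
        calc d ≤ G.dist vstar c + G.dist c v := hconn.dist_triangle
          _ ≤ 1 + r.length := by
              rw [hdist1]
              exact add_le_add_right (SimpleGraph.dist_le r) 1
      have hq1 : q.length = 1 := by
        rcases Nat.lt_or_ge q.length 1 with h | h
        · exfalso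
          have : vstar = c := SimpleGraph.Walk.eq_of_length_eq_zero (p := q) (by omega)
          exact hvstarU (this ▸ hcU)
        · omega
      have : p.getVert 1 = c := by
        rw [hqr, SimpleGraph.Walk.getVert_append, hq1]
        rw [if_neg (lt_irrefl _), Nat.sub_self]
        exact r.getVert_zero
      exact this.symm
    -- any neighbour of v on the path is z
    have hCN : ∀ c ∈ C, G.Adj v c → c = z := by
      intro c hc hcadj
      obtain ⟨q, r, hqr⟩ := SimpleGraph.Walk.mem_support_iff_exists_append.mp hc
      have hlen : p.length = q.length + r.length := by
        rw [hqr, SimpleGraph.Walk.length_append]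
      have hdist1 : G.dist c v = 1 := SimpleGraph.dist_eq_one_iff_adj.mpr hcadj.symm
      have htri : d ≤ q.length + 1 := by
        calc d ≤ G.dist vstar c + G.dist c v := hconn.dist_triangle
          _ ≤ q.length + 1 := by
              rw [hdist1]
              exact add_le_add_left (SimpleGraph.dist_le q) 1
      have hr0 : r.length ≠ 0 := by
        intro h
        have : c = v := SimpleGraph.Walk.eq_of_length_eq_zero h
        exact G.irrefl (this ▸ hcadj)
      have hq1 : q.length = d - 1 := by omega
      have : p.getVert (d-1) = c := by
        rw [hqr, SimpleGraph.Walk.getVert_append, hq1]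
        rw [if_neg (lt_irrefl _), Nat.sub_self]
        exact r.getVert_zero
      exact this.symm
    set S : Set (Fin n) := (U \ {u₁}) ∪ ((G.neighborSet v ∩ Wset) \ {z}) with hS
    have hScard : b ≤ S.ncard := by
      rw [hS, Set.ncard_union_eq _ (Set.toFinite _) (Set.toFinite _)]
      · have hc1 : b - 2 ≤ (U \ {u₁}).ncard := by
          rw [Set.ncard_diff_singleton_of_mem huU]
          omega
        have hc2 : 2 ≤ ((G.neighborSet v ∩ Wset) \ {z}).ncard := by
          by_cases hzmem : z ∈ G.neighborSet v ∩ Wset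
          · rw [Set.ncard_diff_singleton_of_mem hzmem]
            omega
          · rw [Set.diff_singleton_eq_self hzmem]
            omega
        omega
      · rw [Set.disjoint_left]
        rintro a ⟨haU, -⟩ ⟨⟨-, haW⟩, -⟩
        exact hWU a haW haU
    apply build C S hCconn hScard
    · rintro s (hsU | hsN) hsC
      · exact hsU.2 (hCU s hsC hsU.1)
      · exact hsN.2 (hCN s hsC hsN.1.1)
    · rintro s (hsU | hsN)
      · exact ⟨vstar, hvstarC, hsU.1⟩
      · exact ⟨v, hvC, hsN.1.1⟩
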